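/- Let Ω ⊆ ℝ³ be open and let U⁽¹⁾, U⁽²⁾ : Ω → M₂(ℂ) be continuously differentiable with unitary values. For a unitary-valued differentiable V define the currents Lᵢ(V) = V† ∂ᵢV and Rᵢ(V) = V ∂ᵢV†, the modified currents L̃ᵢ(V) = Lᵢ(V) − (1/4) Σⱼ [Lⱼ(V),[Lⱼ(V),Lᵢ(V)]] and R̃ᵢ(V) = Rᵢ(V) − (1/4) Σⱼ [Rⱼ(V),[Rⱼ(V),Rᵢ(V)]], and the Skyrme energy density e(V) = −(1/2) Σᵢ tr(Lᵢ(V)Lᵢ(V)) − (1/16) Σ_{i,j} tr([Lⱼ(V),Lᵢ(V)][Lⱼ(V),Lᵢ(V)]). Write Lᵢ = Lᵢ(U⁽¹⁾), L̃ᵢ = L̃ᵢ(U⁽¹⁾), Rᵢ = Rᵢ(U⁽²⁾), R̃ᵢ = R̃ᵢ(U⁽²⁾). Then at every point of Ω, e(U⁽¹⁾U⁽²⁾) = e(U⁽¹⁾) + e(U⁽²⁾) + w₂ + w₄, where w₂ = Σᵢ tr(Lᵢ R̃ᵢ + L̃ᵢ Rᵢ − Lᵢ Rᵢ) and w₄ =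 −(1/8) Σ_{i,j} tr([Lᵢ,Rⱼ][Lᵢ,Rⱼ] + [Lᵢ,Rⱼ][Rᵢ,Lⱼ] + [Lᵢ,Lⱼ][Rᵢ,Rⱼ]). -/

import Mathlib

open Matrix

noncomputable section

/-- `ℝ³` with the Euclidean norm. -/
abbrev E3 : Type := EuclideanSpace ℝ (Fin 3)

/-- `2 × 2` complex matrices. -/
abbrev M2 : Type := Matrix (Fin 2) (Fin 2) ℂ

/-- Entrywise partial derivative `∂ᵢ` of a matrix-valued field on `ℝ³`. -/
def pdM (i : Fin 3) (V : E3 → M2) (x : E3) : M2 :=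
  Matrix.of fun a b => fderiv ℝ (fun y => V y a b) x (EuclideanSpace.single i 1)

/-- The matrix commutator `[A,B] = AB - BA`. -/
def brk (A B : M2) : M2 := A * B - B * A

/-- The current `Lᵢ(V) = V† ∂ᵢV`. -/
def curL (i : Fin 3) (V : E3 → M2) (x : E3) : M2 := (V x)ᴴ * pdM i V x

/-- The current `Rᵢ(V) = V ∂ᵢV†`. -/
def curR (i : Fin 3) (V : E3 → M2) (x : E3) : M2 :=
  V x * pdM i (fun y => (V y)ᴴ) x

/-- The modified current `L̃ᵢ(V) = Lᵢ(V) - (1/4) Σⱼ [Lⱼ(V),[Lⱼ(V),Lᵢ(V)]]`. -/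
def curLt (i : Fin 3) (V : E3 → M2) (x : E3) : M2 :=
  curL i V x - (1 / 4 : ℂ) • ∑ j : Fin 3, brk (curL j V x) (brk (curL j V x) (curL i V x))

/-- The modified current `R̃ᵢ(V) = Rᵢ(V) - (1/4) Σⱼ [Rⱼ(V),[Rⱼ(V),Rᵢ(V)]]`. -/
def curRt (i : Fin 3) (V : E3 → M2) (x : E3) : M2 :=
  curR i V x - (1 / 4 : ℂ) • ∑ j : Fin 3, brk (curR j V x) (brk (curR j V x) (curR i V x))

/-- The Skyrme energy density
`e(V) = -(1/2) Σᵢ tr(Lᵢ Lᵢ) - (1/16) Σᵢⱼ tr([Lⱼ,Lᵢ][Lⱼ,Lᵢ])`. -/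
def eDen (V : E3 → M2) (x : E3) : ℂ :=
  -(1 / 2 : ℂ) * ∑ i : Fin 3, (curL i V x * curL i V x).trace
    - (1 / 16 : ℂ) * ∑ i : Fin 3, ∑ j : Fin 3,
        (brk (curL j V x) (curL i V x) * brk (curL j V x) (curL i V x)).trace

/-! ### Auxiliary lemmas -/

lemma brk_neg_neg (X Y : M2) : brk (-X) (-Y) = brk X Y := by
  rw [brk, brk]; noncomm_ring

lemma brk_conj (Q : M2) (h : Q * Qᴴ = 1) (X Y : M2) :
    brk (Qᴴ * X * Q) (Qᴴ * Y * Q) = Qᴴ * brk X Y * Q := by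
  have e1 : Qᴴ * X * Q * (Qᴴ * Y * Q) = Qᴴ * (X * (Q * Qᴴ) * Y) * Q := by noncomm_ring
  have e2 : Qᴴ * Y * Q * (Qᴴ * X * Q) = Qᴴ * (Y * (Q * Qᴴ) * X) * Q := by noncomm_ring
  rw [brk, brk, e1, e2, h, mul_one, mul_one]
  noncomm_ring

lemma trace_conj (Q : M2) (h : Q * Qᴴ = 1) (X Y : M2) :
    (Qᴴ * X * Q * (Qᴴ * Y * Q)).trace = (X * Y).trace := by
  have e1 : Qᴴ * X * Q * (Qᴴ * Y * Q) = Qᴴ * (X * (Q * Qᴴ) * Y) * Q := by noncomm_ring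
  rw [e1, h, mul_one, Matrix.trace_mul_comm, ← mul_assoc, h, one_mul]

lemma pdM_mul (F G : E3 → M2) (x : E3) (i : Fin 3)
    (hF : ∀ a b, DifferentiableAt ℝ (fun y => F y a b) x)
    (hG : ∀ a b, DifferentiableAt ℝ (fun y => G y a b) x) :
    pdM i (fun y => F y * G y) x = pdM i F x * G x + F x * pdM i G x := by
  ext a b
  have h2 : (fun y => (F y * G y) a b) = fun y => ∑ c : Fin 2, F y a c * G y c b := by
    funext y; rw [Matrix.mul_apply]
  have h3 : fderiv ℝ (fun y => (F y * G y) a b) x (EuclideanSpace.single i 1)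
      = ∑ c : Fin 2, (F x a c * fderiv ℝ (fun y => G y c b) x (EuclideanSpace.single i 1)
          + G x c b * fderiv ℝ (fun y => F y a c) x (EuclideanSpace.single i 1)) := by
    rw [h2, fderiv_fun_sum (A := fun c y => F y a c * G y c b) fun c _ => (hF a c).mul (hG c b), ContinuousLinearMap.sum_apply]
    refine Finset.sum_congr rfl fun c _ => ?_
    rw [fderiv_fun_mul (hF a c) (hG c b)]
    simp
  simp only [pdM, of_apply, Matrix.add_apply, Matrix.mul_apply]
  rw [← h2, h3]
  simp only [Fin.sum_univ_two]
  ring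

lemma pdM_eqOn_one {F : E3 → M2} {Ω : Set E3} (hΩ : IsOpen Ω) {x : E3} (hx : x ∈ Ω)
    (h : ∀ y ∈ Ω, F y = 1) (i : Fin 3) : pdM i F x = 0 := by
  ext a b
  have hev : (fun y => F y a b) =ᶠ[nhds x] fun _ => (1 : M2) a b :=
    Filter.eventuallyEq_of_mem (hΩ.mem_nhds hx) fun y hy => by rw [h y hy]
  simp only [pdM, of_apply, Matrix.zero_apply]
  rw [hev.fderiv_eq]
  simp

set_option maxHeartbeats 4000000 in
lemma key (L R : Fin 3 → M2) :
    -(1 / 2 : ℂ) * ∑ i : Fin 3, ((L i - R i) * (L i - R i)).trace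
      - (1 / 16 : ℂ) * ∑ i : Fin 3, ∑ j : Fin 3,
          (brk (L j - R j) (L i - R i) * brk (L j - R j) (L i - R i)).trace
    = (-(1 / 2 : ℂ) * ∑ i : Fin 3, (L i * L i).trace
        - (1 / 16 : ℂ) * ∑ i : Fin 3, ∑ j : Fin 3,
            (brk (L j) (L i) * brk (L j) (L i)).trace)
      + (-(1 / 2 : ℂ) * ∑ i : Fin 3, (R i * R i).trace
        - (1 / 16 : ℂ) * ∑ i : Fin 3, ∑ j : Fin 3,
            (brk (R j) (R i) * brk (R j) (R i)).trace)
      + (∑ i : Fin 3,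
          (L i * (R i - (1 / 4 : ℂ) • ∑ j : Fin 3, brk (R j) (brk (R j) (R i)))
            + (L i - (1 / 4 : ℂ) • ∑ j : Fin 3, brk (L j) (brk (L j) (L i))) * R i
            - L i * R i).trace)
      + (-(1 / 8 : ℂ) * ∑ i : Fin 3, ∑ j : Fin 3,
          (brk (L i) (R j) * brk (L i) (R j)
            + brk (L i) (R j) * brk (R i) (L j)
            + brk (L i) (L j) * brk (R i) (R j)).trace) := by
  simp only [Fin.sum_univ_three, brk, trace_fin_two, mul_apply, Fin.sum_univ_two,
    Matrix.sub_apply, Matrix.add_apply, Matrix.smul_apply, smul_eq_mul, Matrix.neg_apply]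
  ring

/-- Pointwise decomposition of the Skyrme energy density of the product
ansatz: `e(U⁽¹⁾U⁽²⁾) = e(U⁽¹⁾) + e(U⁽²⁾) + w₂ + w₄` with
`w₂ = Σᵢ tr(Lᵢ R̃ᵢ + L̃ᵢ Rᵢ - Lᵢ Rᵢ)` and
`w₄ = -(1/8) Σᵢⱼ tr([Lᵢ,Rⱼ][Lᵢ,Rⱼ] + [Lᵢ,Rⱼ][Rᵢ,Lⱼ] + [Lᵢ,Lⱼ][Rᵢ,Rⱼ])`,
where `Lᵢ = Lᵢ(U⁽¹⁾)` and `Rᵢ = Rᵢ(U⁽²⁾)`. -/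
theorem product_ansatz_energy_density (Ω : Set E3) (hΩ : IsOpen Ω)
    (U1 U2 : E3 → M2)
    (hU1d : ∀ a b : Fin 2, ContDiffOn ℝ 1 (fun y => U1 y a b) Ω)
    (hU2d : ∀ a b : Fin 2, ContDiffOn ℝ 1 (fun y => U2 y a b) Ω)
    (hU1u : ∀ x ∈ Ω, (U1 x)ᴴ * U1 x = 1 ∧ U1 x * (U1 x)ᴴ = 1)
    (hU2u : ∀ x ∈ Ω, (U2 x)ᴴ * U2 x = 1 ∧ U2 x * (U2 x)ᴴ = 1) :
    ∀ x ∈ Ω,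
      eDen (fun y => U1 y * U2 y) x
        = eDen U1 x + eDen U2 x
          + (∑ i : Fin 3,
              (curL i U1 x * curRt i U2 x + curLt i U1 x * curR i U2 x
                - curL i U1 x * curR i U2 x).trace)
          + (-(1 / 8 : ℂ) * ∑ i : Fin 3, ∑ j : Fin 3,
              (brk (curL i U1 x) (curR j U2 x) * brk (curL i U1 x) (curR j U2 x)
                + brk (curL i U1 x) (curR j U2 x) * brk (curR i U2 x) (curL j U1 x)
                + brk (curL i U1 x) (curL j U1 x) * brk (curR i U2 x) (curR j U2 x)).trace) := by
  intro x hx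
  obtain ⟨h1l, _h1r⟩ := hU1u x hx
  obtain ⟨h2l, h2r⟩ := hU2u x hx
  have hd1 : ∀ a b, DifferentiableAt ℝ (fun y => U1 y a b) x := fun a b =>
    ((hU1d a b).differentiableOn one_ne_zero).differentiableAt (hΩ.mem_nhds hx)
  have hd2 : ∀ a b, DifferentiableAt ℝ (fun y => U2 y a b) x := fun a b =>
    ((hU2d a b).differentiableOn one_ne_zero).differentiableAt (hΩ.mem_nhds hx)
  have hd2s : ∀ a b, DifferentiableAt ℝ (fun y => (U2 y)ᴴ a b) x := fun a b => by
    simpa [Matrix.conjTranspose_apply] using (hd2 b a).star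
  have hrel : ∀ i, pdM i (fun y => (U2 y)ᴴ) x * U2 x + (U2 x)ᴴ * pdM i U2 x = 0 := by
    intro i
    have h0 : pdM i (fun y => (U2 y)ᴴ * U2 y) x = 0 :=
      pdM_eqOn_one hΩ hx (fun y hy => (hU2u y hy).1) i
    have h1 : pdM i (fun y => (U2 y)ᴴ * U2 y) x
        = pdM i (fun y => (U2 y)ᴴ) x * U2 x + (U2 x)ᴴ * pdM i U2 x :=
      pdM_mul _ _ x i hd2s hd2
    rw [← h1, h0]
  have hM : ∀ i, curL i U2 x = (U2 x)ᴴ * -curR i U2 x * U2 x := by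
    intro i
    have hDQ : pdM i (fun y => (U2 y)ᴴ) x * U2 x = -((U2 x)ᴴ * pdM i U2 x) :=
      eq_neg_of_add_eq_zero_left (hrel i)
    simp only [curL, curR]
    have e : (U2 x)ᴴ * -(U2 x * pdM i (fun y => (U2 y)ᴴ) x) * U2 x
        = -((U2 x)ᴴ * U2 x * (pdM i (fun y => (U2 y)ᴴ) x * U2 x)) := by noncomm_ring
    rw [e, h2l, one_mul, hDQ, neg_neg]
  have hA : ∀ i, curL i (fun y => U1 y * U2 y) x
      = (U2 x)ᴴ * (curL i U1 x - curR i U2 x) * U2 x := by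
    intro i
    have e0 : curL i (fun y => U1 y * U2 y) x
        = (U1 x * U2 x)ᴴ * (pdM i U1 x * U2 x + U1 x * pdM i U2 x) := by
      simp only [curL]
      rw [pdM_mul U1 U2 x i hd1 hd2]
    rw [e0, conjTranspose_mul]
    have e1 : (U2 x)ᴴ * (U1 x)ᴴ * (pdM i U1 x * U2 x + U1 x * pdM i U2 x)
        = (U2 x)ᴴ * ((U1 x)ᴴ * pdM i U1 x) * U2 x
          + (U2 x)ᴴ * ((U1 x)ᴴ * U1 x) * pdM i U2 x := by
      noncomm_ring
    rw [e1, h1l, mul_one]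
    have e2 : (U2 x)ᴴ * pdM i U2 x = curL i U2 x := rfl
    have e3 : (U1 x)ᴴ * pdM i U1 x = curL i U1 x := rfl
    rw [e2, e3, hM i]
    noncomm_ring
  simp only [eDen, curLt, curRt, hA, hM, brk_conj _ h2r, brk_neg_neg,
    trace_conj _ h2r, neg_mul_neg]
  exact key (fun i => curL i U1 x) (fun i => curR i U2 x)
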